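/- Let K be a field of characteristic zero. For every t ∈ K with t ≠ 0 and t ≠ 1, the degree-5 polynomial X·(X − 4)·(P(X) − t) ∈ K[X] is squarefree. (Hence for t ∉ {0,1} the curve y² = x(x−4)(P(x)−t) of the family of Proposition 4.1 is a smooth hyperelliptic curve of genus 2.) -/
import Mathlib

open Polynomial

/-- For `t ∉ {0,1}` the degree-5 polynomial `X·(X−4)·(P(X)−t)` with
`P(X) = (1/4)·X·(X−3)²` is squarefree over a field of characteristic zero. -/
theorem stmt_1 (K : Type*) [Field K] [CharZero K] (t : K) (h0 : t ≠ 0) (h1 : t ≠ 1) :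
    Squarefree (X * (X - 4) * (C (1 / 4 : K) * X * (X - 3) ^ 2 - C t)) := by
  set Q : K[X] := C (1 / 4 : K) * X * (X - 3) ^ 2 - C t with hQ
  have h4C : (4 : K[X]) = C (4 : K) := (map_ofNat C 4).symm
  have hc : (4 : K[X]) * C (1 / 4 : K) = 1 := by
    rw [h4C, ← C_mul, ← C_1]; norm_num
  have hdne : (12 : K) * t * (t - 1) ≠ 0 := by
    have : (12 : K) ≠ 0 := by norm_num
    exact mul_ne_zero (mul_ne_zero this h0) (sub_ne_zero.mpr h1)
  -- derivative of Q
  have hder : derivative Q = 3 * C (1 / 4 : K) * ((X - 3) * (X - 1)) := by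
    rw [hQ]
    simp only [derivative_sub, derivative_mul, derivative_pow, derivative_C, derivative_X,
      derivative_one, derivative_ofNat, map_ofNat, Nat.cast_ofNat]
    ring
  -- Bezout identity (cleared of denominators)
  have key : (6 * (X - 1 - 2 * C t)) * Q
      + (4 - 2 * (X - 1 - 2 * C t) * (X - 2)) * (3 * C (1 / 4 : K) * ((X - 3) * (X - 1)))
      = C ((12 : K) * t * (t - 1)) := by
    have hC : C ((12 : K) * t * (t - 1)) = 12 * C t * (C t - 1) := by
      simp [C_mul, C_sub, map_ofNat]
    rw [hC, hQ]
    linear_combination (6 * C t * (X - 3)) * hc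
  have hsepQ : Q.Separable := by
    rw [separable_def, hder]
    refine ⟨C (((12 : K) * t * (t - 1))⁻¹) * (6 * (X - 1 - 2 * C t)),
      C (((12 : K) * t * (t - 1))⁻¹) * (4 - 2 * (X - 1 - 2 * C t) * (X - 2)), ?_⟩
    calc C (((12 : K) * t * (t - 1))⁻¹) * (6 * (X - 1 - 2 * C t)) * Q
          + C (((12 : K) * t * (t - 1))⁻¹) * (4 - 2 * (X - 1 - 2 * C t) * (X - 2))
            * (3 * C (1 / 4 : K) * ((X - 3) * (X - 1)))
        = C (((12 : K) * t * (t - 1))⁻¹) * ((6 * (X - 1 - 2 * C t)) * Q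
          + (4 - 2 * (X - 1 - 2 * C t) * (X - 2)) * (3 * C (1 / 4 : K) * ((X - 3) * (X - 1)))) := by
          ring
      _ = 1 := by rw [key, ← C_mul, inv_mul_cancel₀ hdne, C_1]
  -- coprimality facts
  have hXQ : IsCoprime (X : K[X]) Q := by
    rw [irreducible_X.coprime_iff_not_dvd]
    intro h
    rw [show (X : K[X]) = X - C 0 by simp, dvd_iff_isRoot] at h
    simp [hQ, IsRoot] at h
    exact h0 h
  have hX4Q : IsCoprime ((X : K[X]) - 4) Q := by
    rw [h4C, (irreducible_X_sub_C (4 : K)).coprime_iff_not_dvd]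
    intro h
    rw [dvd_iff_isRoot] at h
    simp [hQ, IsRoot] at h
    norm_num at h
    exact h1 (by linear_combination -h)
  have hXX4 : IsCoprime (X : K[X]) (X - 4) := by
    rw [irreducible_X.coprime_iff_not_dvd]
    intro h
    rw [show (X : K[X]) = X - C 0 by simp, dvd_iff_isRoot] at h
    simp [IsRoot] at h
  have hsep : (X * (X - 4) * Q).Separable := by
    refine Separable.mul ?_ hsepQ (IsCoprime.mul_left hXQ hX4Q)
    refine Separable.mul separable_X ?_ hXX4
    rw [h4C]; exact separable_X_sub_C
  exact hsep.squarefree
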